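/- Under L-action similarity and the candidate-set decomposition: if Q : ℝⁿ → ℝ is L-Lipschitz, a⋆ ∈ ℝⁿ, N ⊆ ℝⁿ finite nonempty, ĝ satisfies |ĝ(a) − Q(a)| ≤ ε on N, and ã ∈ N minimizes |ĝ(a) − Q(a⋆)| over N, then Q(a⋆) − Q(ã) ≤ L(‖α̂ − a⋆‖ + min_{a ∈ N} ‖a − α̂‖) + 2ε for any point α̂ ∈ ℝⁿ. -/
import Mathlib


/-- SLDAS error bound with the actor-error / proposal-radius decomposition:
Q(a⋆) − Q(ã) ≤ L(δ + ψ) + 2ε for any proposal α̂. -/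
theorem sgf_error_bound_decomposed {n : ℕ}
    (Q ghat : EuclideanSpace ℝ (Fin n) → ℝ) (L ε : ℝ) (hL : 0 ≤ L) (hε : 0 ≤ ε)
    (hLip : ∀ a a' : EuclideanSpace ℝ (Fin n), |Q a - Q a'| ≤ L * ‖a - a'‖)
    (astar : EuclideanSpace ℝ (Fin n))
    (N : Finset (EuclideanSpace ℝ (Fin n))) (hN : N.Nonempty)
    (hcritic : ∀ a ∈ N, |ghat a - Q a| ≤ ε)
    (atil : EuclideanSpace ℝ (Fin n)) (hatil : atil ∈ N)
    (hmin : ∀ a ∈ N, |ghat atil - Q astar| ≤ |ghat a - Q astar|) :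
    ∀ αhat : EuclideanSpace ℝ (Fin n),
      Q astar - Q atil ≤
        L * (‖αhat - astar‖ + N.inf' hN (fun a => ‖a - αhat‖)) + 2 * ε := by
  intro αhat
  obtain ⟨b, hbN, hb⟩ := N.exists_mem_eq_inf' hN (fun a => ‖a - αhat‖)
  have h1 : Q astar - Q atil ≤ |ghat atil - Q astar| + ε := by
    have := hcritic atil hatil
    have h := abs_sub_abs_le_abs_sub (ghat atil - Q atil) (ghat atil - Q astar)
    calc Q astar - Q atil ≤ |Q astar - Q atil| := le_abs_self _
      _ = |ghat atil - Q atil - (ghat atil - Q astar)| := by ring_nf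
      _ ≤ |ghat atil - Q atil| + |ghat atil - Q astar| := abs_sub _ _
      _ ≤ ε + |ghat atil - Q astar| := by linarith
      _ = |ghat atil - Q astar| + ε := by ring
  have h2 : |ghat atil - Q astar| ≤ |ghat b - Q astar| := hmin b hbN
  have h3 : |ghat b - Q astar| ≤ ε + L * ‖b - astar‖ := by
    have hc := hcritic b hbN
    have hl := hLip b astar
    calc |ghat b - Q astar| = |(ghat b - Q b) + (Q b - Q astar)| := by ring_nf
      _ ≤ |ghat b - Q b| + |Q b - Q astar| := abs_add_le _ _
      _ ≤ ε + L * ‖b - astar‖ := add_le_add hc hl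
  have h4 : ‖b - astar‖ ≤ ‖b - αhat‖ + ‖αhat - astar‖ := by
    have := norm_sub_le_norm_sub_add_norm_sub b αhat astar
    linarith [norm_sub_le (b - αhat) (astar - αhat)]
  have h4' : ‖b - astar‖ ≤ ‖b - αhat‖ + ‖αhat - astar‖ := by
    calc ‖b - astar‖ = ‖(b - αhat) + (αhat - astar)‖ := by abel_nf
      _ ≤ ‖b - αhat‖ + ‖αhat - astar‖ := norm_add_le _ _
  have h5 : L * ‖b - astar‖ ≤ L * (‖αhat - astar‖ + ‖b - αhat‖) := by
    apply mul_le_mul_of_nonneg_left _ hL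
    linarith
  rw [hb]
  linarith
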